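/- Let n be an even positive integer and let Ω be an n×n real skew-symmetric matrix (Ωᵀ = −Ω). Set H = Ω·Ωᵀ. Then tr(H³) − (1/2 + 2/n)·tr(H)·tr(H²) + (1/(2n) + 1/n²)·(tr H)³ ≤ 0. -/

import Mathlib

open Matrix
open scoped RealInnerProductSpace

section helpers
variable {n : ℕ}

lemma dot_self_nonneg' (x : Fin n → ℝ) : 0 ≤ x ⬝ᵥ x :=
  Finset.sum_nonneg fun _ _ => mul_self_nonneg _

lemma psd_trace_nonneg {A : Matrix (Fin n) (Fin n) ℝ} (hA : A.PosSemidef) : 0 ≤ A.trace := by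
  rw [Matrix.trace]
  apply Finset.sum_nonneg
  intro i _
  have h := hA.dotProduct_mulVec_nonneg (Pi.single i 1)
  simpa [single_dotProduct, Matrix.mulVec_single, Matrix.diag] using h

open scoped MatrixOrder in
lemma psd_exists_conjTranspose_mul_self {A : Matrix (Fin n) (Fin n) ℝ} (hA : A.PosSemidef) :
    ∃ C : Matrix (Fin n) (Fin n) ℝ, A = Cᴴ * C := by
  obtain ⟨X, hX, -, h⟩ := CFC.exists_sqrt_of_isSelfAdjoint_of_quasispectrumRestricts hA.isHermitian
    (QuasispectrumRestricts.nnreal_of_nonneg hA.nonneg)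
  exact ⟨X, by rw [← star_eq_conjTranspose, hX.star_eq]; simpa using h.symm⟩

lemma psd_mul_trace_nonneg {A B : Matrix (Fin n) (Fin n) ℝ} (hA : A.PosSemidef)
    (hB : B.PosSemidef) : 0 ≤ (A * B).trace := by
  obtain ⟨C, rfl⟩ := psd_exists_conjTranspose_mul_self hA
  rw [Matrix.mul_assoc, Matrix.trace_mul_comm]
  exact psd_trace_nonneg (hB.mul_mul_conjTranspose_same C)

lemma vecMulVec_mulVec' (a b x : Fin n → ℝ) :
    Matrix.vecMulVec a b *ᵥ x = (b ⬝ᵥ x) • a := by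
  ext i
  simp [Matrix.vecMulVec_apply, Matrix.mulVec, dotProduct, Finset.sum_mul, Finset.mul_sum,
    mul_assoc, mul_comm, mul_left_comm]

lemma trace_mul_vecMulVec (A : Matrix (Fin n) (Fin n) ℝ) (a b : Fin n → ℝ) :
    (A * Matrix.vecMulVec a b).trace = b ⬝ᵥ (A *ᵥ a) := by
  simp [Matrix.trace, Matrix.diag, Matrix.mul_apply, Matrix.vecMulVec_apply, Matrix.mulVec,
    dotProduct, Finset.mul_sum, mul_assoc, mul_comm, mul_left_comm]

end helpers

theorem stmt_6 (n : ℕ) (hn : 0 < n) (hne : Even n)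
    (Ω : Matrix (Fin n) (Fin n) ℝ) (hskew : Ωᵀ = -Ω) :
    (Ω * Ωᵀ * (Ω * Ωᵀ) * (Ω * Ωᵀ)).trace
      - (1 / 2 + 2 / (n : ℝ)) * (Ω * Ωᵀ).trace * (Ω * Ωᵀ * (Ω * Ωᵀ)).trace
      + (1 / (2 * (n : ℝ)) + 1 / (n : ℝ) ^ 2) * (Ω * Ωᵀ).trace ^ 3 ≤ 0 := by
  classical
  set H : Matrix (Fin n) (Fin n) ℝ := Ω * Ωᵀ with hHdef
  have hconj : Ωᴴ = Ωᵀ := by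
    ext i j; simp [Matrix.conjTranspose_apply]
  have hPSD : H.PosSemidef := by
    have h := Matrix.posSemidef_self_mul_conjTranspose Ω
    rwa [hconj] at h
  have hHer : H.IsHermitian := hPSD.isHermitian
  set t : ℝ := H.trace with htdef
  have htnn : 0 ≤ t := psd_trace_nonneg hPSD
  have hΩH : H * Ω = Ω * H := by
    rw [hHdef, hskew]
    simp [Matrix.mul_neg, Matrix.neg_mul, Matrix.mul_assoc]
  -- every eigenvalue of H is at most t/2
  have heig : ∀ j, hHer.eigenvalues j ≤ t / 2 := by
    intro j
    by_cases hpos : 0 < hHer.eigenvalues j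
    swap
    · push_neg at hpos; linarith
    set h : ℝ := hHer.eigenvalues j with hh
    set v : Fin n → ℝ := ⇑(hHer.eigenvectorBasis j) with hv
    have hveig : H *ᵥ v = h • v := hHer.mulVec_eigenvectorBasis j
    have hvv : v ⬝ᵥ v = 1 := by
      have h1 : ‖hHer.eigenvectorBasis j‖ = 1 := hHer.eigenvectorBasis.orthonormal.1 j
      have h2 : (⟪hHer.eigenvectorBasis j, hHer.eigenvectorBasis j⟫) = (1 : ℝ) := by
        rw [real_inner_self_eq_norm_sq, h1]; norm_num
      rw [← h2]
      rw [EuclideanSpace.inner_eq_star_dotProduct, star_trivial]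
    set w : Fin n → ℝ := Ω *ᵥ v with hw
    have hweig : H *ᵥ w = h • w := by
      rw [hw, Matrix.mulVec_mulVec, hΩH, ← Matrix.mulVec_mulVec, hveig, Matrix.mulVec_smul]
    have hvw : v ⬝ᵥ w = 0 := by
      have h1 : v ⬝ᵥ w = (Ωᵀ *ᵥ v) ⬝ᵥ v := by
        rw [hw, Matrix.dotProduct_mulVec, Matrix.mulVec_transpose]
      rw [hskew, Matrix.neg_mulVec, ← hw] at h1
      have h2 : (-w) ⬝ᵥ v = -(v ⬝ᵥ w) := by
        rw [neg_dotProduct, dotProduct_comm]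
      rw [h2] at h1
      linarith
    have hww : w ⬝ᵥ w = h := by
      have h1 : w ⬝ᵥ w = (Ωᵀ *ᵥ w) ⬝ᵥ v := by
        conv_lhs => rw [hw]
        rw [Matrix.dotProduct_mulVec, Matrix.mulVec_transpose]
      have h2 : Ωᵀ *ᵥ w = H *ᵥ v := by
        rw [hskew, Matrix.neg_mulVec, hw, Matrix.mulVec_mulVec, hHdef, hskew]
        simp [Matrix.mul_neg, Matrix.neg_mulVec]
      rw [h2, hveig] at h1
      simp only [smul_dotProduct, smul_eq_mul, hvv, mul_one] at h1
      exact h1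
    -- projection onto span{v, w}
    set P : Matrix (Fin n) (Fin n) ℝ :=
      Matrix.vecMulVec v v + h⁻¹ • Matrix.vecMulVec w w with hP
    have hProj : ((1 : Matrix (Fin n) (Fin n) ℝ) - P).PosSemidef := by
      refine Matrix.PosSemidef.of_dotProduct_mulVec_nonneg ?_ ?_
      · show ((1 : Matrix (Fin n) (Fin n) ℝ) - P)ᴴ = (1 : Matrix (Fin n) (Fin n) ℝ) - P
        rw [Matrix.conjTranspose_sub, Matrix.conjTranspose_one]
        congr 1
        ext i k
        simp [hP, Matrix.conjTranspose_apply, Matrix.vecMulVec_apply]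
        ring
      · intro x
        have hxv : x ⬝ᵥ v = v ⬝ᵥ x := dotProduct_comm x v
        have hxw : x ⬝ᵥ w = w ⬝ᵥ x := dotProduct_comm x w
        have e1 : star x ⬝ᵥ (((1 : Matrix (Fin n) (Fin n) ℝ) - P) *ᵥ x)
            = x ⬝ᵥ x - ((v ⬝ᵥ x) * (v ⬝ᵥ x) + h⁻¹ * ((w ⬝ᵥ x) * (w ⬝ᵥ x))) := by
          simp [hP, Matrix.sub_mulVec, Matrix.add_mulVec, Matrix.smul_mulVec,
            Matrix.one_mulVec, vecMulVec_mulVec', dotProduct_sub, dotProduct_add,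
            dotProduct_smul, smul_eq_mul, hxv, hxw]
        rw [e1]
        set a : ℝ := v ⬝ᵥ x with ha
        set b : ℝ := w ⬝ᵥ x with hb
        set s : ℝ := x ⬝ᵥ x with hs
        have hy : 0 ≤ (h • x - (h * a) • v - b • w) ⬝ᵥ (h • x - (h * a) • v - b • w) :=
          dot_self_nonneg' _
        have hy2 : (h • x - (h * a) • v - b • w) ⬝ᵥ (h • x - (h * a) • v - b • w)
            = h ^ 2 * s - h ^ 2 * a ^ 2 - h * b ^ 2 := by
          have hvx : v ⬝ᵥ x = a := rfl
          have hwx : w ⬝ᵥ x = b := rfl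
          have hxv' : x ⬝ᵥ v = a := by rw [hxv]
          have hxw' : x ⬝ᵥ w = b := by rw [hxw]
          have hwv : w ⬝ᵥ v = 0 := by rw [dotProduct_comm]; exact hvw
          simp [dotProduct_sub, sub_dotProduct, dotProduct_smul,
            smul_dotProduct, smul_eq_mul, hvv, hvw, hww, hwv, hvx, hwx, hxv', hxw', hs]
          ring
        rw [hy2] at hy
        have hgoal : s - (a * a + h⁻¹ * (b * b))
            = (h ^ 2 * s - h ^ 2 * a ^ 2 - h * b ^ 2) / h ^ 2 := by
          field_simp
          ring
        rw [hgoal]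
        positivity
    have hle := psd_mul_trace_nonneg hPSD hProj
    have hPt : (H * P).trace = 2 * h := by
      rw [hP, Matrix.mul_add, Matrix.trace_add, mul_smul_comm, Matrix.trace_smul,
        trace_mul_vecMulVec, trace_mul_vecMulVec, hveig, hweig]
      simp only [dotProduct_smul, smul_eq_mul, hvv, hww]
      field_simp
      ring
    rw [Matrix.mul_sub, Matrix.mul_one, Matrix.trace_sub, hPt] at hle
    linarith
  -- K := (t/2) • 1 - H is positive semidefinite
  set U : Matrix (Fin n) (Fin n) ℝ := (hHer.eigenvectorUnitary : Matrix (Fin n) (Fin n) ℝ)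
    with hU
  have hUU : U * star U = 1 := (Matrix.mem_unitaryGroup_iff).mp (hHer.eigenvectorUnitary).2
  set K : Matrix (Fin n) (Fin n) ℝ := (t / 2) • (1 : Matrix (Fin n) (Fin n) ℝ) - H with hK
  have hKpsd : K.PosSemidef := by
    have hdiag : ((t / 2) • (1 : Matrix (Fin n) (Fin n) ℝ)
        - Matrix.diagonal (RCLike.ofReal ∘ hHer.eigenvalues)).PosSemidef := by
      have h1 : (t / 2) • (1 : Matrix (Fin n) (Fin n) ℝ)
          = Matrix.diagonal (fun _ => t / 2) := by
        ext i k
        simp [Matrix.smul_apply, Matrix.one_apply, Matrix.diagonal_apply]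
      rw [h1]
      have h2 : (RCLike.ofReal ∘ hHer.eigenvalues : Fin n → ℝ) = hHer.eigenvalues := by
        ext i; simp [RCLike.ofReal]
      rw [h2, Matrix.diagonal_sub]
      exact Matrix.PosSemidef.diagonal (fun i => sub_nonneg.2 (heig i))
    have hKeq : K = U * ((t / 2) • (1 : Matrix (Fin n) (Fin n) ℝ)
        - Matrix.diagonal (RCLike.ofReal ∘ hHer.eigenvalues)) * star U := by
      rw [Matrix.mul_sub, Matrix.sub_mul, hK]
      congr 1
      · rw [mul_smul_comm, Matrix.mul_one, smul_mul_assoc, hUU]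
      · conv_lhs => rw [hHer.spectral_theorem, Unitary.conjStarAlgAut_apply]
    have hfin := hdiag.mul_mul_conjTranspose_same U
    rw [← Matrix.star_eq_conjTranspose] at hfin
    rw [hKeq]
    exact hfin
  -- the matrix M
  set c : ℝ := t / 2 with hc
  set m : ℝ := (n : ℝ) / 2 with hm
  set M : Matrix (Fin n) (Fin n) ℝ := m • H - c • (1 : Matrix (Fin n) (Fin n) ℝ) with hM
  have hHsymm : Hᵀ = H := by
    conv_rhs => rw [← hHer]
    ext i k
    simp [Matrix.conjTranspose_apply]
  have hMher : Mᴴ = M := by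
    rw [hM]
    simp [Matrix.conjTranspose_sub, Matrix.conjTranspose_smul, hHsymm]
  have hMMpsd : (M * M).PosSemidef := by
    have h := Matrix.posSemidef_conjTranspose_mul_self M
    rwa [hMher] at h
  have key : 0 ≤ (M * M * K).trace := psd_mul_trace_nonneg hMMpsd hKpsd
  -- expand the trace
  have hMMexp : M * M = (m * m) • (H * H) - (2 * (m * c)) • H
      + (c * c) • (1 : Matrix (Fin n) (Fin n) ℝ) := by
    rw [hM]
    simp only [Matrix.sub_mul, Matrix.mul_sub, smul_mul_assoc, mul_smul_comm,
      Matrix.mul_one, Matrix.one_mul, smul_smul]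
    module
  have hexp : (M * M * K).trace
      = c * ((m * m) * (H * H).trace - (2 * (m * c)) * t + (c * c) * (n : ℝ))
        - ((m * m) * (H * H * H).trace - (2 * (m * c)) * (H * H).trace + (c * c) * t) := by
    rw [hK, Matrix.mul_sub, mul_smul_comm, Matrix.mul_one, Matrix.trace_sub,
      Matrix.trace_smul, hMMexp]
    simp only [Matrix.sub_mul, Matrix.add_mul, smul_mul_assoc, Matrix.one_mul,
      Matrix.trace_add, Matrix.trace_sub, Matrix.trace_smul, Matrix.trace_one, smul_eq_mul,
      Fintype.card_fin, Matrix.mul_assoc]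
    rfl
  rw [hexp] at key
  have hN : (0 : ℝ) < (n : ℝ) := by exact_mod_cast hn
  set p2 : ℝ := (H * H).trace
  set p3 : ℝ := (H * H * H).trace
  have hgoal : p3 - (1 / 2 + 2 / (n : ℝ)) * t * p2 + (1 / (2 * (n : ℝ)) + 1 / (n : ℝ) ^ 2) * t ^ 3
      = -(4 / (n : ℝ) ^ 2) * (c * ((m * m) * p2 - (2 * (m * c)) * t + (c * c) * (n : ℝ))
        - ((m * m) * p3 - (2 * (m * c)) * p2 + (c * c) * t)) := by
    rw [hc, hm]
    field_simp
    ring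
  calc p3 - (1 / 2 + 2 / (n : ℝ)) * t * p2
      + (1 / (2 * (n : ℝ)) + 1 / (n : ℝ) ^ 2) * t ^ 3
      = -(4 / (n : ℝ) ^ 2) * (c * ((m * m) * p2 - (2 * (m * c)) * t + (c * c) * (n : ℝ))
        - ((m * m) * p3 - (2 * (m * c)) * p2 + (c * c) * t)) := hgoal
    _ ≤ 0 := by
        have h4 : 0 ≤ (4 / (n : ℝ) ^ 2) := by positivity
        nlinarith [mul_nonneg h4 key]
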